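/- The singular values of the lower triangular all-ones matrix L ∈ ℝ^{k×k} are σ_l = 1/(2cos(πl/(2k+1))) for l = 1, …, k. In particular, the largest singular value (the operator 2-norm) of L equals 1/(2 sin(π/(2(2k+1)))). -/

import Mathlib

open Matrix Real

namespace Stmt4Aux

/-- The inverse of the all-ones lower triangular matrix: 1 on the diagonal,
-1 on the subdiagonal. -/
def Binv (k : ℕ) : Matrix (Fin k) (Fin k) ℝ :=
  fun i j => (if (i : ℕ) = (j : ℕ) then 1 else 0) + (if (i : ℕ) = (j : ℕ) + 1 then -1 else 0)

lemma sum_ite_val (k : ℕ) (c : ℕ) (v : Fin k → ℝ) :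
    (∑ p : Fin k, if (p : ℕ) = c then v p else 0) = if h : c < k then v ⟨c, h⟩ else 0 := by
  split_ifs with h
  · rw [Finset.sum_eq_single ⟨c, h⟩]
    · simp
    · intro b _ hb
      have : (b : ℕ) ≠ c := fun hc => hb (Fin.ext hc)
      simp [this]
    · simp
  · apply Finset.sum_eq_zero
    intro p _
    have : (p : ℕ) ≠ c := fun hc => h (hc ▸ p.isLt)
    simp [this]

lemma sum_ite_succ_val (k : ℕ) (c : ℕ) (v : Fin k → ℝ) :
    (∑ p : Fin k, if (p : ℕ) + 1 = c then v p else 0)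
      = if h : c - 1 < k ∧ 1 ≤ c then v ⟨c - 1, h.1⟩ else 0 := by
  rcases Nat.eq_zero_or_pos c with hc | hc
  · subst hc; simp
  · have he : ∀ p : Fin k, ((p : ℕ) + 1 = c) = ((p : ℕ) = c - 1) := by
      intro p; apply propext; omega
    simp only [he, sum_ite_val]
    split_ifs <;> first | rfl | omega

lemma mul_Binv (k : ℕ) (L : Matrix (Fin k) (Fin k) ℝ)
    (hL : ∀ i j : Fin k, L i j = if (j : ℕ) ≤ (i : ℕ) then 1 else 0) :
    L * Binv k = 1 := by
  ext p r
  rw [Matrix.mul_apply]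
  have h1 : ∀ q : Fin k, L p q * Binv k q r =
      (if (q : ℕ) = (r : ℕ) then L p q else 0) + (if (q : ℕ) = (r : ℕ) + 1 then -L p q else 0) := by
    intro q
    simp only [Binv]
    split_ifs <;> first | (exfalso; omega) | ring
  simp only [h1, Finset.sum_add_distrib, sum_ite_val]
  rw [dif_pos r.isLt]
  have hp := p.isLt
  have hr := r.isLt
  simp only [hL, Matrix.one_apply, Fin.ext_iff]
  split_ifs <;>
    first
    | (exfalso; omega)
    | norm_num

lemma Binv_mul (k : ℕ) (L : Matrix (Fin k) (Fin k) ℝ)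
    (hL : ∀ i j : Fin k, L i j = if (j : ℕ) ≤ (i : ℕ) then 1 else 0) :
    Binv k * L = 1 := by
  ext p r
  rw [Matrix.mul_apply]
  have h1 : ∀ q : Fin k, Binv k p q * L q r =
      (if (q : ℕ) = (p : ℕ) then L q r else 0) + (if (q : ℕ) + 1 = (p : ℕ) then -L q r else 0) := by
    intro q; simp only [Binv]; split_ifs <;> first | (exfalso; omega) | ring
  simp only [h1, Finset.sum_add_distrib, sum_ite_val, sum_ite_succ_val]
  rw [dif_pos p.isLt]
  have hp := p.isLt
  have hr := r.isLt
  simp only [hL, Matrix.one_apply, Fin.ext_iff]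
  split_ifs <;> simp_all <;> omega

noncomputable def bb (k l : ℕ) : ℝ := π - 2 * (π * l / (2 * k + 1))

noncomputable def ee (k l : ℕ) : ℕ → ℝ := fun n => Real.sin (((k : ℝ) - n) * bb k l)

noncomputable def ev (k l : ℕ) : Fin k → ℝ := fun i => ee k l i

noncomputable def lam (k l : ℕ) : ℝ := (1 / (2 * Real.cos (π * l / (2 * k + 1)))) ^ 2

lemma trig3 (a x : ℝ) : Real.sin (x + a) + Real.sin (x - a) = 2 * Real.cos a * Real.sin x := by
  rw [Real.sin_add, Real.sin_sub]; ring

lemma ee_shift (k l : ℕ) :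
    Real.sin (((k : ℝ) + 1) * bb k l) = Real.sin ((k : ℝ) * bb k l) := by
  have h2k : (2 * (k : ℝ) + 1) ≠ 0 := by positivity
  have hcast : (((k : ℤ) - (l : ℤ) : ℤ) : ℝ) = (k : ℝ) - (l : ℝ) := by push_cast; ring
  have h : ((k : ℝ) + 1) * bb k l
      = (π - (k : ℝ) * bb k l) + (((k : ℤ) - (l : ℤ) : ℤ) : ℝ) * (2 * π) := by
    rw [hcast]
    simp only [bb]
    field_simp
    ring
  rw [h, Real.sin_add_int_mul_two_pi, Real.sin_pi_sub]

lemma BBT_eigen (k l : ℕ) :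
    (Binv k * (Binv k)ᵀ).mulVec (ev k l) = (2 - 2 * Real.cos (bb k l)) • (ev k l) := by
  rw [← Matrix.mulVec_mulVec]
  have hw : (Binv k)ᵀ.mulVec (ev k l) = fun q : Fin k => ee k l q - ee k l (q + 1) := by
    funext q
    show ∑ p : Fin k, (Binv k)ᵀ q p * ev k l p = _
    have h1 : ∀ p : Fin k, (Binv k)ᵀ q p * ev k l p =
        (if (p : ℕ) = (q : ℕ) then ev k l p else 0)
          + (if (p : ℕ) = (q : ℕ) + 1 then -(ev k l p) else 0) := by
      intro p
      simp only [Matrix.transpose_apply, Binv]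
      split_ifs <;> first | (exfalso; omega) | ring
    simp only [h1, Finset.sum_add_distrib, sum_ite_val]
    rw [dif_pos q.isLt]
    rcases lt_or_ge ((q : ℕ) + 1) k with h | h
    · rw [dif_pos h]
      simp only [ev, ee]
      push_cast
      ring
    · rw [dif_neg (by omega)]
      have hqk : (q : ℕ) + 1 = k := by omega
      have h0 : ee k l ((q : ℕ) + 1) = 0 := by
        simp [ee, hqk]
      simp [ev, h0]
  rw [hw]
  funext i
  show ∑ q : Fin k, Binv k i q * (ee k l q - ee k l (q + 1)) = _
  have h2 : ∀ q : Fin k, Binv k i q * (ee k l q - ee k l (q + 1)) =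
      (if (q : ℕ) = (i : ℕ) then (ee k l q - ee k l (q + 1)) else 0)
        + (if (q : ℕ) + 1 = (i : ℕ) then -(ee k l q - ee k l (q + 1)) else 0) := by
    intro q; simp only [Binv]; split_ifs <;> first | (exfalso; omega) | ring
  simp only [h2, Finset.sum_add_distrib, sum_ite_val, sum_ite_succ_val]
  rw [dif_pos i.isLt]
  simp only [Pi.smul_apply, smul_eq_mul, ev]
  rcases Nat.eq_zero_or_pos (i : ℕ) with hi | hi
  · rw [dif_neg (by omega)]
    rw [hi]
    have hsh : Real.sin ((k : ℝ) * bb k l + bb k l) = Real.sin ((k : ℝ) * bb k l) := by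
      rw [← ee_shift k l]; ring_nf
    have ht := trig3 (bb k l) ((k : ℝ) * bb k l)
    simp only [ee]
    have e1 : ((k : ℝ) - (0 : ℕ)) * bb k l = (k : ℝ) * bb k l := by push_cast; ring
    have e2 : ((k : ℝ) - ((0 : ℕ) + 1 : ℕ)) * bb k l = (k : ℝ) * bb k l - bb k l := by
      push_cast; ring
    rw [e1, e2]
    linear_combination hsh - ht
  · rw [dif_pos ⟨by omega, hi⟩]
    have hi1 : ((i : ℕ) - 1 + 1) = (i : ℕ) := by omega
    have ht := trig3 (bb k l) (((k : ℝ) - (i : ℕ)) * bb k l)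
    simp only [hi1, ee]
    have e3 : ((k : ℝ) - ((i : ℕ) - 1 : ℕ)) * bb k l
        = ((k : ℝ) - (i : ℕ)) * bb k l + bb k l := by
      rw [Nat.cast_sub hi]; push_cast; ring
    have e4 : ((k : ℝ) - ((i : ℕ) + 1 : ℕ)) * bb k l
        = ((k : ℝ) - (i : ℕ)) * bb k l - bb k l := by
      push_cast; ring
    rw [e3, e4]
    linear_combination -ht

lemma theta_pos (k l : ℕ) (hl1 : 1 ≤ l) : 0 < π * l / (2 * (k : ℝ) + 1) := by
  have : (0 : ℝ) < l := by exact_mod_cast hl1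
  have := Real.pi_pos
  positivity

lemma theta_lt (k l : ℕ) (hlk : l ≤ k) : π * l / (2 * (k : ℝ) + 1) < π / 2 := by
  rw [div_lt_iff₀ (by positivity)]
  have hl : (l : ℝ) ≤ k := by exact_mod_cast hlk
  nlinarith [Real.pi_pos]

lemma cos_theta_pos (k l : ℕ) (hl1 : 1 ≤ l) (hlk : l ≤ k) :
    0 < Real.cos (π * l / (2 * (k : ℝ) + 1)) := by
  apply Real.cos_pos_of_mem_Ioo
  have h1 := theta_pos k l hl1
  have h2 := theta_lt k l hlk
  have := Real.pi_pos
  exact ⟨by linarith, h2⟩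

lemma mu_eq (k l : ℕ) :
    2 - 2 * Real.cos (bb k l) = 4 * Real.cos (π * l / (2 * (k : ℝ) + 1)) ^ 2 := by
  have hb : bb k l = π - 2 * (π * l / (2 * (k : ℝ) + 1)) := by
    simp [bb]
  rw [hb, Real.cos_pi_sub, Real.cos_two_mul]
  ring

lemma eigen (k l : ℕ) (hl1 : 1 ≤ l) (hlk : l ≤ k)
    (L : Matrix (Fin k) (Fin k) ℝ)
    (hL : ∀ i j : Fin k, L i j = if (j : ℕ) ≤ (i : ℕ) then 1 else 0) :
    (Lᵀ * L).mulVec (ev k l) = lam k l • ev k l := by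
  have hinv1 : L * Binv k = 1 := mul_Binv k L hL
  have hinv2 : Binv k * L = 1 := Binv_mul k L hL
  have hprod : (Lᵀ * L) * (Binv k * (Binv k)ᵀ) = 1 := by
    calc (Lᵀ * L) * (Binv k * (Binv k)ᵀ)
        = Lᵀ * ((L * Binv k) * (Binv k)ᵀ) := by
          rw [Matrix.mul_assoc, Matrix.mul_assoc]
      _ = Lᵀ * (Binv k)ᵀ := by rw [hinv1, Matrix.one_mul]
      _ = (Binv k * L)ᵀ := by rw [Matrix.transpose_mul]
      _ = 1 := by rw [hinv2, Matrix.transpose_one]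
  have h2 : (Lᵀ * L).mulVec ((Binv k * (Binv k)ᵀ).mulVec (ev k l)) = ev k l := by
    rw [Matrix.mulVec_mulVec, hprod, Matrix.one_mulVec]
  rw [BBT_eigen k l, Matrix.mulVec_smul] at h2
  have hc := cos_theta_pos k l hl1 hlk
  have hlamμ : lam k l * (2 - 2 * Real.cos (bb k l)) = 1 := by
    rw [mu_eq]
    simp only [lam]
    rw [div_pow]
    field_simp
    ring
  calc (Lᵀ * L).mulVec (ev k l)
      = (lam k l * (2 - 2 * Real.cos (bb k l))) • (Lᵀ * L).mulVec (ev k l) := by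
        rw [hlamμ, one_smul]
    _ = lam k l • ((2 - 2 * Real.cos (bb k l)) • (Lᵀ * L).mulVec (ev k l)) :=
        (smul_smul _ _ _).symm
    _ = lam k l • ev k l := by rw [h2]

lemma sin_b_pos (k l : ℕ) (hl1 : 1 ≤ l) (hlk : l ≤ k) : 0 < Real.sin (bb k l) := by
  have h1 := theta_pos k l hl1
  have h2 := theta_lt k l hlk
  apply Real.sin_pos_of_pos_of_lt_pi
  · simp only [bb]; linarith
  · simp only [bb]; linarith

lemma ev_ne (k l : ℕ) (hk : 1 ≤ k) (hl1 : 1 ≤ l) (hlk : l ≤ k) : ev k l ≠ 0 := by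
  intro h
  have h1 : ev k l ⟨k - 1, by omega⟩ = 0 := by rw [h]; rfl
  have h2 : ee k l (k - 1) = 0 := h1
  rw [ee] at h2
  have e : ((k : ℝ) - ((k - 1 : ℕ) : ℝ)) * bb k l = bb k l := by
    rw [Nat.cast_sub hk]; push_cast; ring
  rw [e] at h2
  exact absurd h2 (ne_of_gt (sin_b_pos k l hl1 hlk))

lemma lam_inj (k : ℕ) {l l' : ℕ} (hl1 : 1 ≤ l) (hlk : l ≤ k) (hl1' : 1 ≤ l') (hlk' : l' ≤ k)
    (h : lam k l = lam k l') : l = l' := by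
  have hc := cos_theta_pos k l hl1 hlk
  have hc' := cos_theta_pos k l' hl1' hlk'
  simp only [lam] at h
  have hcc : Real.cos (π * l / (2 * (k : ℝ) + 1)) = Real.cos (π * l' / (2 * (k : ℝ) + 1)) := by
    have h2 : Real.cos (π * l / (2 * (k : ℝ) + 1)) ^ 2
        = Real.cos (π * l' / (2 * (k : ℝ) + 1)) ^ 2 := by
      have hne : ((2 * Real.cos (π * l / (2 * (k : ℝ) + 1))) ^ 2) ≠ 0 := by positivity
      have hne' : ((2 * Real.cos (π * l' / (2 * (k : ℝ) + 1))) ^ 2) ≠ 0 := by positivity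
      field_simp at h
      nlinarith [h]
    have hle1 : Real.cos (π * l / (2 * (k : ℝ) + 1)) ≤ Real.cos (π * l' / (2 * (k : ℝ) + 1)) := by
      nlinarith
    have hle2 : Real.cos (π * l' / (2 * (k : ℝ) + 1)) ≤ Real.cos (π * l / (2 * (k : ℝ) + 1)) := by
      nlinarith
    linarith
  have hθ : π * l / (2 * (k : ℝ) + 1) = π * l' / (2 * (k : ℝ) + 1) := by
    have hπ := Real.pi_pos
    have m1 : π * l / (2 * (k : ℝ) + 1) ∈ Set.Icc 0 π := by
      constructor
      · positivity
      · have := theta_lt k l hlk; linarith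
    have m2 : π * l' / (2 * (k : ℝ) + 1) ∈ Set.Icc 0 π := by
      constructor
      · positivity
      · have := theta_lt k l' hlk'; linarith
    exact Real.injOn_cos m1 m2 hcc
  have hll : (l : ℝ) = l' := by
    have h2k : (2 * (k : ℝ) + 1) ≠ 0 := by positivity
    have hπ : π ≠ 0 := Real.pi_ne_zero
    field_simp at hθ
    exact hθ
  exact_mod_cast hll

lemma lam_le (k l : ℕ) (hl1 : 1 ≤ l) (hlk : l ≤ k) (hk : 1 ≤ k) : lam k l ≤ lam k k := by
  have hc := cos_theta_pos k l hl1 hlk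
  have hck := cos_theta_pos k k hk le_rfl
  have hmono : Real.cos (π * k / (2 * (k : ℝ) + 1)) ≤ Real.cos (π * l / (2 * (k : ℝ) + 1)) := by
    apply Real.cos_le_cos_of_nonneg_of_le_pi
    · have := theta_pos k l hl1; linarith
    · have := theta_lt k k le_rfl
      have := Real.pi_pos
      linarith
    · have hπ := Real.pi_pos
      have hll : (l : ℝ) ≤ k := by exact_mod_cast hlk
      apply div_le_div_of_nonneg_right ?_ (by positivity) |>.trans_eq rfl
      nlinarith
  simp only [lam]
  rw [div_pow, div_pow]
  apply div_le_div_of_nonneg_left (by norm_num) (by positivity)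
  nlinarith

lemma symm_dot {n : Type*} [Fintype n] (M : Matrix n n ℝ) (hM : Mᵀ = M) (x y : n → ℝ) :
    (M.mulVec x) ⬝ᵥ y = x ⬝ᵥ (M.mulVec y) := by
  have hv : x ᵥ* M = M *ᵥ x := by
    conv_lhs => rw [← hM]
    rw [Matrix.vecMul_transpose]
  rw [Matrix.dotProduct_mulVec, hv]

lemma bilin {n : Type*} [Fintype n] (A B : Matrix n n ℝ) (u w : n → ℝ) :
    (A.mulVec u) ⬝ᵥ (B.mulVec w) = u ⬝ᵥ ((Aᵀ * B).mulVec w) := by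
  rw [← Matrix.mulVec_mulVec, Matrix.dotProduct_mulVec (v := u), Matrix.vecMul_transpose]

lemma ortho {n : Type*} [Fintype n] (M : Matrix n n ℝ) (hM : Mᵀ = M) (v w : n → ℝ) (a b : ℝ)
    (hv : M.mulVec v = a • v) (hw : M.mulVec w = b • w) (hab : a ≠ b) : v ⬝ᵥ w = 0 := by
  have h1 : a * (v ⬝ᵥ w) = b * (v ⬝ᵥ w) := by
    calc a * (v ⬝ᵥ w) = (a • v) ⬝ᵥ w := by rw [smul_dotProduct]; rfl
      _ = (M.mulVec v) ⬝ᵥ w := by rw [hv]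
      _ = v ⬝ᵥ (M.mulVec w) := symm_dot M hM v w
      _ = v ⬝ᵥ (b • w) := by rw [hw]
      _ = b * (v ⬝ᵥ w) := by rw [dotProduct_smul]; rfl
  by_contra hne
  exact hab (mul_right_cancel₀ hne h1)

end Stmt4Aux

open Stmt4Aux in
theorem stmt4 (k : ℕ) (hk : 1 ≤ k)
    (L : Matrix (Fin k) (Fin k) ℝ)
    (hL : ∀ i j : Fin k, L i j = if (j : ℕ) ≤ (i : ℕ) then 1 else 0) :
    -- the σ_l² are exactly the eigenvalues of LᵀL
    (∀ l : ℕ, l ∈ Finset.Icc 1 k →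
      ∃ v : Fin k → ℝ, v ≠ 0 ∧
        (Lᵀ * L).mulVec v = ((1 / (2 * Real.cos (π * l / (2 * k + 1)))) ^ 2) • v) ∧
    (∀ μ : ℝ, (∃ v : Fin k → ℝ, v ≠ 0 ∧ (Lᵀ * L).mulVec v = μ • v) →
      ∃ l ∈ Finset.Icc 1 k, μ = (1 / (2 * Real.cos (π * l / (2 * k + 1)))) ^ 2) ∧
    -- the operator 2-norm of L equals the largest singular value
    ‖Matrix.toEuclideanCLM (𝕜 := ℝ) L‖ = 1 / (2 * Real.sin (π / (2 * (2 * k + 1)))) := by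
  have hMsymm : (Lᵀ * L)ᵀ = Lᵀ * L := by
    rw [Matrix.transpose_mul, Matrix.transpose_transpose]
  -- the matrix of eigenvectors
  set V : Matrix (Fin k) (Fin k) ℝ := Matrix.of (fun i l : Fin k => ev k ((l : ℕ) + 1) i) with hV
  set d : Fin k → ℝ := fun l : Fin k => ev k ((l : ℕ) + 1) ⬝ᵥ ev k ((l : ℕ) + 1) with hd
  have hbound : ∀ l : Fin k, 1 ≤ (l : ℕ) + 1 ∧ (l : ℕ) + 1 ≤ k := fun l => ⟨le_add_self, l.isLt⟩
  have heig : ∀ l : Fin k, (Lᵀ * L).mulVec (ev k ((l : ℕ) + 1)) =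
      lam k ((l : ℕ) + 1) • ev k ((l : ℕ) + 1) :=
    fun l => eigen k _ (hbound l).1 (hbound l).2 L hL
  have hne : ∀ l : Fin k, ev k ((l : ℕ) + 1) ≠ 0 :=
    fun l => ev_ne k _ hk (hbound l).1 (hbound l).2
  have hdpos : ∀ l : Fin k, 0 < d l := by
    intro l
    rcases (Finset.sum_nonneg fun i _ => mul_self_nonneg (ev k ((l : ℕ) + 1) i)).lt_or_eq
      with h | h
    · exact h
    · exact absurd (dotProduct_self_eq_zero.mp h.symm) (hne l)
  have hVTV : Vᵀ * V = Matrix.diagonal d := by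
    ext a c
    rw [Matrix.mul_apply, Matrix.diagonal_apply]
    by_cases hac : a = c
    · subst hac
      rw [if_pos rfl]
      rfl
    · rw [if_neg hac]
      have hlam : lam k ((a : ℕ) + 1) ≠ lam k ((c : ℕ) + 1) := by
        intro h
        exact hac (Fin.ext (by
          have := lam_inj k (hbound a).1 (hbound a).2 (hbound c).1 (hbound c).2 h
          omega))
      exact ortho (Lᵀ * L) hMsymm _ _ _ _ (heig a) (heig c) hlam
  have hDinv : Matrix.diagonal d * Matrix.diagonal (fun l => (d l)⁻¹) = 1 := by
    have hfun : (fun l => d l * (d l)⁻¹) = fun _ => (1 : ℝ) :=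
      funext fun l => mul_inv_cancel₀ (hdpos l).ne'
    rw [Matrix.diagonal_mul_diagonal, hfun, Matrix.diagonal_one]
  have hright : Vᵀ * (V * Matrix.diagonal (fun l => (d l)⁻¹)) = 1 := by
    rw [← Matrix.mul_assoc, hVTV, hDinv]
  have hleft : (V * Matrix.diagonal (fun l => (d l)⁻¹)) * Vᵀ = 1 :=
    mul_eq_one_comm.mp hright
  -- part 1
  refine ⟨?_, ?_, ?_⟩
  · intro l hl
    rw [Finset.mem_Icc] at hl
    exact ⟨ev k l, ev_ne k l hk hl.1 hl.2, eigen k l hl.1 hl.2 L hL⟩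
  -- part 2
  · rintro μ ⟨v, hv0, hveig⟩
    by_contra hcon
    push_neg at hcon
    have hperp : Vᵀ.mulVec v = 0 := by
      funext c
      show ∑ i, Vᵀ c i * v i = 0
      have : ∑ i, Vᵀ c i * v i = v ⬝ᵥ ev k ((c : ℕ) + 1) := by
        rw [dotProduct_comm]
        rfl
      rw [this]
      apply ortho (Lᵀ * L) hMsymm v _ μ (lam k ((c : ℕ) + 1)) hveig (heig c)
      have hmem : (c : ℕ) + 1 ∈ Finset.Icc 1 k := by
        rw [Finset.mem_Icc]; exact hbound c
      exact hcon _ hmem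
    have : v = 0 := by
      calc v = (((V * Matrix.diagonal fun l => (d l)⁻¹) * Vᵀ)).mulVec v := by
            rw [hleft, Matrix.one_mulVec]
        _ = (V * Matrix.diagonal fun l => (d l)⁻¹).mulVec (Vᵀ.mulVec v) := by
            rw [Matrix.mulVec_mulVec]
        _ = 0 := by rw [hperp, Matrix.mulVec_zero]
    exact hv0 this
  -- part 3
  · have h2k : (2 * (k : ℝ) + 1) ≠ 0 := by positivity
    have hck := cos_theta_pos k k hk le_rfl
    have hsc : Real.sin (π / (2 * (2 * (k : ℝ) + 1))) = Real.cos (π * k / (2 * (k : ℝ) + 1)) := by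
      rw [← Real.sin_pi_div_two_sub]
      congr 1
      field_simp
      ring
    rw [hsc]
    set σ : ℝ := 1 / (2 * Real.cos (π * k / (2 * (k : ℝ) + 1))) with hσ
    have hσpos : 0 < σ := by rw [hσ]; positivity
    have hσsq : σ ^ 2 = lam k k := by rw [hσ, lam]
    -- diagonalization identity
    have hMV : (Lᵀ * L) * V = V * Matrix.diagonal (fun l : Fin k => lam k ((l : ℕ) + 1)) := by
      ext i c
      rw [Matrix.mul_apply, Matrix.mul_diagonal]
      have h1 : ∑ j, (Lᵀ * L) i j * V j c = ((Lᵀ * L).mulVec (ev k ((c : ℕ) + 1))) i := rfl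
      rw [h1, heig c]
      simp only [Pi.smul_apply, smul_eq_mul, hV, Matrix.of_apply]
      ring
    -- the quadratic-form bound
    have key : ∀ y : Fin k → ℝ, (L.mulVec y) ⬝ᵥ (L.mulVec y) ≤ lam k k * (y ⬝ᵥ y) := by
      intro y
      obtain ⟨c, hc⟩ : ∃ c : Fin k → ℝ,
          c = ((Matrix.diagonal fun l => (d l)⁻¹) * Vᵀ).mulVec y := ⟨_, rfl⟩
      have hy : V.mulVec c = y := by
        rw [hc, Matrix.mulVec_mulVec, ← Matrix.mul_assoc, hleft, Matrix.one_mulVec]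
      have h5 : (L.mulVec y) ⬝ᵥ (L.mulVec y)
          = c ⬝ᵥ ((Matrix.diagonal (fun l : Fin k => d l * lam k ((l : ℕ) + 1))).mulVec c) := by
        calc (L.mulVec y) ⬝ᵥ (L.mulVec y) = y ⬝ᵥ ((Lᵀ * L).mulVec y) := bilin L L y y
          _ = (V.mulVec c) ⬝ᵥ ((Lᵀ * L).mulVec (V.mulVec c)) := by rw [hy]
          _ = (V.mulVec c) ⬝ᵥ (((Lᵀ * L) * V).mulVec c) := by rw [Matrix.mulVec_mulVec]
          _ = (V.mulVec c) ⬝ᵥ ((V * Matrix.diagonal fun l : Fin k =>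
                lam k ((l : ℕ) + 1)).mulVec c) := by rw [hMV]
          _ = c ⬝ᵥ ((Vᵀ * (V * Matrix.diagonal fun l : Fin k =>
                lam k ((l : ℕ) + 1))).mulVec c) := bilin _ _ _ _
          _ = c ⬝ᵥ ((Matrix.diagonal (fun l : Fin k => d l * lam k ((l : ℕ) + 1))).mulVec c) := by
              rw [← Matrix.mul_assoc, hVTV, Matrix.diagonal_mul_diagonal]
      have h6 : y ⬝ᵥ y = c ⬝ᵥ ((Matrix.diagonal d).mulVec c) := by
        calc y ⬝ᵥ y = (V.mulVec c) ⬝ᵥ (V.mulVec c) := by rw [hy]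
          _ = c ⬝ᵥ ((Vᵀ * V).mulVec c) := bilin _ _ _ _
          _ = _ := by rw [hVTV]
      rw [h5, h6]
      simp only [dotProduct, Matrix.mulVec_diagonal]
      rw [Finset.mul_sum]
      apply Finset.sum_le_sum
      intro l _
      have h1 := lam_le k ((l : ℕ) + 1) (hbound l).1 (hbound l).2 hk
      have h2 : (0 : ℝ) ≤ d l * (c l) ^ 2 := mul_nonneg (hdpos l).le (sq_nonneg _)
      calc c l * (d l * lam k ((l : ℕ) + 1) * c l)
          = lam k ((l : ℕ) + 1) * (d l * (c l) ^ 2) := by ring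
        _ ≤ lam k k * (d l * (c l) ^ 2) := mul_le_mul_of_nonneg_right h1 h2
        _ = lam k k * (c l * (d l * c l)) := by ring
    -- equality at the top eigenvector
    have keyeq : (L.mulVec (ev k k)) ⬝ᵥ (L.mulVec (ev k k))
        = lam k k * (ev k k ⬝ᵥ ev k k) := by
      rw [bilin, eigen k k hk le_rfl L hL, dotProduct_smul]
      rfl
    -- norms on Euclidean space in terms of dot products
    have hnorm : ∀ y : Fin k → ℝ,
        ‖(WithLp.equiv 2 (Fin k → ℝ)).symm y‖ = Real.sqrt (y ⬝ᵥ y) := by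
      intro y
      rw [EuclideanSpace.norm_eq]
      congr 1
      simp only [WithLp.equiv_symm_apply, PiLp.toLp_apply, Real.norm_eq_abs, sq_abs, dotProduct]
      exact Finset.sum_congr rfl fun i _ => pow_two (y i)
    have hdotpos : 0 < ev k k ⬝ᵥ ev k k := by
      have h := hdpos ⟨k - 1, by omega⟩
      have hk1 : (k - 1) + 1 = k := Nat.sub_add_cancel hk
      simpa [hd, hk1] using h
    apply le_antisymm
    · apply ContinuousLinearMap.opNorm_le_bound _ hσpos.le
      intro x
      have hx : x = (WithLp.equiv 2 (Fin k → ℝ)).symm ((WithLp.equiv 2 (Fin k → ℝ)) x) :=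
        ((WithLp.equiv 2 (Fin k → ℝ)).symm_apply_apply x).symm
      set y : Fin k → ℝ := (WithLp.equiv 2 (Fin k → ℝ)) x with hy
      rw [hx, (show ∀ z : Fin k → ℝ, Matrix.toEuclideanCLM (𝕜 := ℝ) L ((WithLp.equiv 2 (Fin k → ℝ)).symm z)
          = (WithLp.equiv 2 (Fin k → ℝ)).symm (Matrix.toLin' L z) from fun z => rfl), hnorm, hnorm, Matrix.toLin'_apply]
      calc Real.sqrt ((L.mulVec y) ⬝ᵥ (L.mulVec y))
          ≤ Real.sqrt (lam k k * (y ⬝ᵥ y)) := Real.sqrt_le_sqrt (key y)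
        _ = σ * Real.sqrt (y ⬝ᵥ y) := by
            rw [← hσsq, Real.sqrt_mul (sq_nonneg σ), Real.sqrt_sq hσpos.le]
    · have hTx : ‖Matrix.toEuclideanCLM (𝕜 := ℝ) L
          ((WithLp.equiv 2 (Fin k → ℝ)).symm (ev k k))‖
          = σ * ‖(WithLp.equiv 2 (Fin k → ℝ)).symm (ev k k)‖ := by
        rw [(show ∀ z : Fin k → ℝ, Matrix.toEuclideanCLM (𝕜 := ℝ) L ((WithLp.equiv 2 (Fin k → ℝ)).symm z)
          = (WithLp.equiv 2 (Fin k → ℝ)).symm (Matrix.toLin' L z) from fun z => rfl), hnorm, hnorm, Matrix.toLin'_apply, keyeq,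
          ← hσsq, Real.sqrt_mul (sq_nonneg σ), Real.sqrt_sq hσpos.le]
      have hle := (Matrix.toEuclideanCLM (𝕜 := ℝ) L).le_opNorm
        ((WithLp.equiv 2 (Fin k → ℝ)).symm (ev k k))
      rw [hTx] at hle
      have hxvpos : 0 < ‖(WithLp.equiv 2 (Fin k → ℝ)).symm (ev k k)‖ := by
        rw [hnorm]
        exact Real.sqrt_pos.mpr hdotpos
      exact le_of_mul_le_mul_right hle hxvpos
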